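/- For a ∈ {1, ..., 2^N}, write a - 1 in binary and for a ≠ b let δ(a,b) = i + 1 where i is the largest index with differing bits. Then for any a₁ < a₂ < ... < a_n in {1, ..., 2^N}, δ(a₁, a_n) = max over 1 ≤ i ≤ n-1 of δ(a_i, a_{i+1}). -/

import Mathlib

/-- `delta a b = i + 1` where `i` is the most significant bit at which the binary
expansions of `a - 1` and `b - 1` differ (for `a ≠ b`). -/
def delta (a b : ℕ) : ℕ := Nat.log2 ((a - 1) ^^^ (b - 1)) + 1

lemma xor_shiftRight' (x y k : ℕ) : (x ^^^ y) >>> k = (x >>> k) ^^^ (y >>> k) := by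
  apply Nat.eq_of_testBit_eq
  intro i
  simp [Nat.testBit_shiftRight, Nat.testBit_xor]

lemma log2_xor_le (u v : ℕ) :
    Nat.log2 (u ^^^ v) ≤ max u.log2 v.log2 := by
  rcases eq_or_ne (u ^^^ v) 0 with h | h
  · simp [h, Nat.log2_zero]
  · have hu : u < 2 ^ (max u.log2 v.log2 + 1) :=
      lt_of_lt_of_le Nat.lt_log2_self
        (Nat.pow_le_pow_right (by norm_num) (by omega))
    have hv : v < 2 ^ (max u.log2 v.log2 + 1) :=
      lt_of_lt_of_le Nat.lt_log2_self
        (Nat.pow_le_pow_right (by norm_num) (by omega))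
    have := (Nat.log2_lt h).mpr (Nat.xor_lt_two_pow hu hv)
    omega

lemma Nat_xor_eq_zero' {a b : ℕ} : a ^^^ b = 0 ↔ a = b := by
  constructor
  · intro h
    have : b = a ^^^ (a ^^^ b) := by rw [← Nat.xor_assoc, Nat.xor_self, Nat.zero_xor]
    rw [h, Nat.xor_zero] at this
    exact this.symm
  · rintro rfl
    exact Nat.xor_self a

lemma log2_xor_mono {x u v y : ℕ} (hxu : x ≤ u) (huv : u < v) (hvy : v ≤ y) :
    Nat.log2 (u ^^^ v) ≤ Nat.log2 (x ^^^ y) := by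
  set k := Nat.log2 (u ^^^ v) with hk
  have h0 : u ^^^ v ≠ 0 := by
    simp only [ne_eq, Nat_xor_eq_zero']; omega
  have h2 : 2 ^ k ≤ u ^^^ v := Nat.log2_self_le h0
  have hpos : 0 < 2 ^ k := Nat.pow_pos (by norm_num)
  have hne : u >>> k ≠ v >>> k := by
    intro he
    have : (u ^^^ v) >>> k = 0 := by
      rw [xor_shiftRight', he, Nat.xor_self]
    rw [Nat.shiftRight_eq_div_pow] at this
    have := (Nat.div_eq_zero_iff).mp this
    omega
  have hlt : u >>> k < v >>> k := by
    have : u >>> k ≤ v >>> k := by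
      simp only [Nat.shiftRight_eq_div_pow]
      exact Nat.div_le_div_right (le_of_lt huv)
    omega
  have hxy : x >>> k < y >>> k := by
    have h1 : x >>> k ≤ u >>> k := by
      simp only [Nat.shiftRight_eq_div_pow]
      exact Nat.div_le_div_right hxu
    have h2 : v >>> k ≤ y >>> k := by
      simp only [Nat.shiftRight_eq_div_pow]
      exact Nat.div_le_div_right hvy
    omega
  have hxyne : (x ^^^ y) >>> k ≠ 0 := by
    rw [xor_shiftRight']
    simp only [ne_eq, Nat_xor_eq_zero']
    omega
  have hxy0 : x ^^^ y ≠ 0 := by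
    intro h; rw [h] at hxyne; simp at hxyne
  rw [Nat.le_log2 hxy0]
  rw [Nat.shiftRight_eq_div_pow] at hxyne
  rcases Nat.lt_or_ge (x ^^^ y) (2 ^ k) with h | h
  · exact absurd (Nat.div_eq_of_lt h) hxyne
  · exact h

lemma delta_mono {x u v y : ℕ} (hx : 1 ≤ x) (hxu : x ≤ u) (huv : u < v) (hvy : v ≤ y) :
    delta u v ≤ delta x y := by
  unfold delta
  have := log2_xor_mono (x := x - 1) (u := u - 1) (v := v - 1) (y := y - 1)
    (by omega) (by omega) (by omega)
  omega

lemma delta_ultra {x y z : ℕ} : delta x z ≤ max (delta x y) (delta y z) := by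
  unfold delta
  have hxz : (x - 1) ^^^ (z - 1) = ((x - 1) ^^^ (y - 1)) ^^^ ((y - 1) ^^^ (z - 1)) := by
    rw [Nat.xor_assoc, ← Nat.xor_assoc (y - 1), Nat.xor_self, Nat.zero_xor]
  rw [hxz]
  have := log2_xor_le ((x - 1) ^^^ (y - 1)) ((y - 1) ^^^ (z - 1))
  omega

lemma key : ∀ n, 2 ≤ n → ∀ a : ℕ → ℕ, 1 ≤ a 1 →
    (∀ i, 1 ≤ i → i < n → a i < a (i + 1)) →
    delta (a 1) (a n) = (Finset.Icc 1 (n - 1)).sup (fun i => delta (a i) (a (i + 1))) := by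
  intro n hn
  induction n, hn using Nat.le_induction with
  | base =>
    intro a _ _
    simp [Finset.Icc_self]
  | succ n hn ih =>
    intro a ha1 hmono
    have hmono' : ∀ i, 1 ≤ i → i < n → a i < a (i + 1) := fun i h1 h2 =>
      hmono i h1 (by omega)
    have ih' := ih a ha1 hmono'
    -- a is increasing on [1, n+1]
    have hchain : ∀ j, 1 ≤ j → j ≤ n + 1 → a 1 ≤ a j := by
      intro j
      induction j with
      | zero => omega
      | succ m ihm =>
        intro _ h2
        by_cases hm : m = 0
        · subst hm; intros; simp
        · have hA := ihm (by omega) (by omega)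
          have hB := hmono m (by omega) (by omega)
          omega
    have h1n : a 1 < a n := by
      have hA := hchain (n - 1) (by omega) (by omega)
      have hB := hmono (n - 1) (by omega) (by omega)
      have hC : n - 1 + 1 = n := by omega
      rw [hC] at hB
      omega
    have hnn : a n < a (n + 1) := hmono n (by omega) (by omega)
    -- split the sup
    have hicc : Finset.Icc 1 (n + 1 - 1) = insert n (Finset.Icc 1 (n - 1)) := by
      have h : n + 1 - 1 = (n - 1) + 1 := by omega
      rw [h, ← Finset.insert_Icc_right_eq_Icc_add_one (by omega)]
      congr 1
      omega
    rw [hicc, Finset.sup_insert, ← ih']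
    -- main ultrametric equality
    apply le_antisymm
    · have := delta_ultra (x := a 1) (y := a n) (z := a (n + 1))
      simp only [le_max_iff] at this ⊢
      omega
    · apply max_le
      · exact delta_mono (by omega) (by omega) hnn le_rfl
      · exact delta_mono ha1 le_rfl h1n (le_of_lt hnn)

/-- Property B of the stepping-up lemma: for `1 ≤ a 1 < a 2 < ... < a n ≤ 2^N`,
`δ(a 1, a n)` equals the maximum of `δ(a i, a (i+1))` over `1 ≤ i ≤ n - 1`. -/
theorem stmt_4 (N n : ℕ) (a : ℕ → ℕ) (hn : 2 ≤ n)
    (ha1 : 1 ≤ a 1) (haN : a n ≤ 2 ^ N)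
    (hmono : ∀ i, 1 ≤ i → i < n → a i < a (i + 1)) :
    delta (a 1) (a n) = (Finset.Icc 1 (n - 1)).sup (fun i => delta (a i) (a (i + 1))) := by
  exact key n hn a ha1 hmono
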